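/- Let φ(x) = log(1+e^x). For all real numbers B, D, Z, the matrix identity X_D · R · X_Z · L · X_B = X_{D-φ(-Z)} · L · X_{-Z} · R · X_{B-φ(-Z)} holds, where X_Y = [[0,-e^{Y/2}],[e^{-Y/2},0]], R = [[1,1],[-1,0]] and L = [[0,1],[-1,-1]]. -/

import Mathlib

open Matrix
noncomputable def edgeX (Y : ℝ) : Matrix (Fin 2) (Fin 2) ℝ :=
  !![0, -Real.exp (Y/2); Real.exp (-Y/2), 0]
def Rturn : Matrix (Fin 2) (Fin 2) ℝ := !![1, 1; -1, 0]
def Lturn : Matrix (Fin 2) (Fin 2) ℝ := !![0, 1; -1, -1]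
noncomputable def phi (x : ℝ) : ℝ := Real.log (1 + Real.exp x)
theorem flip_identity_RL (B D Z : ℝ) :
    edgeX D * Rturn * edgeX Z * Lturn * edgeX B
      = edgeX (D - phi (-Z)) * Lturn * edgeX (-Z) * Rturn * edgeX (B - phi (-Z)) := by
  have h1 : (0:ℝ) < 1 + Real.exp (-Z) := by positivity
  have hphi : Real.exp (phi (-Z)) = 1 + Real.exp (-Z) := Real.exp_log h1
  set p := Real.exp (phi (-Z) / 2) with hp
  have hp2 : p ^ 2 = 1 + Real.exp (-Z) := by
    rw [hp, sq, ← Real.exp_add, add_halves, hphi]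
  have hppos : (0:ℝ) < p := Real.exp_pos _
  have hD : Real.exp ((D - phi (-Z)) / 2) = Real.exp (D / 2) / p := by
    rw [sub_div, Real.exp_sub, hp]
  have hDm : Real.exp ((phi (-Z) - D) / 2) = Real.exp (-(D / 2)) * p := by
    rw [show (phi (-Z) - D) / 2 = -(D/2) + phi (-Z)/2 by ring, Real.exp_add, hp]
  have hB : Real.exp ((B - phi (-Z)) / 2) = Real.exp (B / 2) / p := by
    rw [sub_div, Real.exp_sub, hp]
  have hBm : Real.exp ((phi (-Z) - B) / 2) = Real.exp (-(B / 2)) * p := by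
    rw [show (phi (-Z) - B) / 2 = -(B/2) + phi (-Z)/2 by ring, Real.exp_add, hp]
  have hZ : Real.exp (Z / 2) * Real.exp (-Z / 2) = 1 := by
    rw [← Real.exp_add, show Z/2 + -Z/2 = (0:ℝ) by ring, Real.exp_zero]
  have hZ2 : Real.exp (-Z / 2) ^ 2 = Real.exp (-Z) := by
    rw [sq, ← Real.exp_add, show -Z/2 + -Z/2 = -Z by ring]
  ext i j
  fin_cases i <;> fin_cases j <;>
    simp [edgeX, Rturn, Lturn, Matrix.mul_apply, Fin.sum_univ_two,
      show (-Z : ℝ) / 2 = -(Z/2) by ring, show -(-Z) / 2 = Z/2 by ring,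
      show ∀ x:ℝ, -x/2 = -(x/2) from fun x => by ring,
      show -(D - phi (-Z)) / 2 = (phi (-Z) - D)/2 by ring,
      show -(B - phi (-Z)) / 2 = (phi (-Z) - B)/2 by ring,
      hD, hDm, hB, hBm] <;>
    field_simp
  all_goals first
    | ring1
    | linear_combination Real.exp (D/2)*Real.exp (Z/2)*Real.exp (B/2)*(hp2 - hZ2)
        + Real.exp (D/2)*Real.exp (B/2)*Real.exp (-Z/2)*hZ
    | linear_combination (-(Real.exp (-D/2)*Real.exp (Z/2)*Real.exp (-B/2)))*(hp2 - hZ2)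
        - Real.exp (-D/2)*Real.exp (-B/2)*Real.exp (-Z/2)*hZ
    | (rw [show -(Z/2) = -Z/2 by ring]
       linear_combination Real.exp (Z/2)*(hp2 - hZ2) + Real.exp (-Z/2)*hZ)
    | (rw [show -(Z/2) = -Z/2 by ring]
       linear_combination (-Real.exp (Z/2))*(hp2 - hZ2) - Real.exp (-Z/2)*hZ)
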